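/- Let 𝒜 be a finite alphabet with |𝒜| = a ≥ 2 and let α ∈ 𝒜. For all n, k ∈ ℕ, the number of strings Y ∈ 𝒜^{n+k} (lists over 𝒜 of length n+k) that contain the constant string of n copies of α as a subsequence is at least C(n+k, k)·(a−1)^k, where C(·,·) denotes the binomial coefficient. Consequently, the post-edit set of the all-α string of length n under an arbitrary insertion-only process with at most k insertions has cardinality at least C(n+k, k)·(a−1)^k. -/

import Mathlib

/-- The post-edit set of a string `X` with deletion budget `d` and insertion
budget `i`: all strings `Y` sharing a common subsequence `Z` with `X` such that
`|X| − |Z| ≤ d` and `|Y| − |Z| ≤ i`. -/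
def PostEditSet {α : Type*} (X : List α) (d i : ℕ) : Set (List α) :=
  {Y | ∃ Z : List α, Z.Sublist X ∧ Z.Sublist Y ∧
    X.length - Z.length ≤ d ∧ Y.length - Z.length ≤ i}

private lemma count_ofFn_eq_sum {𝒜 : Type*} [DecidableEq 𝒜] (α : 𝒜) :
    ∀ (m : ℕ) (g : Fin m → 𝒜),
      (List.ofFn g).count α = ∑ i : Fin m, if g i = α then 1 else 0 := by
  intro m
  induction m with
  | zero => intro g; simp
  | succ m ih =>
      intro g
      rw [List.ofFn_succ, List.count_cons, ih, Fin.sum_univ_succ]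
      simp [beq_iff_eq]
      ring

/-- Over an alphabet of size `a ≥ 2`, the number of strings of length `n + k`
containing the constant string `α^n` as a subsequence is at least
`C(n+k, k)·(a−1)^k`; consequently the post-edit set of `α^n` under at most `k`
insertions (and no deletions) is at least that large. -/
theorem card_superStrings_ge {𝒜 : Type*} [Fintype 𝒜] [DecidableEq 𝒜] {a : ℕ}
    (hcard : Fintype.card 𝒜 = a) (ha : 2 ≤ a) (α : 𝒜) (n k : ℕ) :
    Nat.card {Y : List 𝒜 // Y.length = n + k ∧ (List.replicate n α).Sublist Y} ≥
      (n + k).choose k * (a - 1) ^ k ∧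
    Nat.card (PostEditSet (List.replicate n α) 0 k) ≥
      (n + k).choose k * (a - 1) ^ k := by
  classical
  set F := {Y : List 𝒜 // Y.length = n + k ∧ (List.replicate n α).Sublist Y} with hF
  -- finiteness of F
  have hFfin : Finite F := by
    have : {Y : List 𝒜 | Y.length = n + k ∧ (List.replicate n α).Sublist Y}.Finite :=
      (List.finite_length_eq 𝒜 (n + k)).subset (fun Y hY => hY.1)
    exact this.to_subtype
  -- the index type
  let T := (S : {S : Finset (Fin (n + k)) // S.card = k}) ×
      ({i // i ∈ S.1} → {β : 𝒜 // β ≠ α})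
  have hcardNe : Fintype.card {β : 𝒜 // β ≠ α} = a - 1 := by
    have h1 : Fintype.card {β : 𝒜 // β ≠ α} =
        Fintype.card 𝒜 - Fintype.card {β : 𝒜 // β = α} :=
      Fintype.card_subtype_compl _
    rw [h1, Fintype.card_subtype_eq, hcard]
  have hT : Fintype.card T = (n + k).choose k * (a - 1) ^ k := by
    rw [Fintype.card_sigma]
    have : ∀ S : {S : Finset (Fin (n + k)) // S.card = k},
        Fintype.card ({i // i ∈ S.1} → {β : 𝒜 // β ≠ α}) = (a - 1) ^ k := by
      intro S
      rw [Fintype.card_fun, hcardNe, Fintype.card_coe, S.2]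
    rw [Finset.sum_congr rfl (fun S _ => this S), Finset.sum_const, smul_eq_mul,
      Finset.card_univ, Fintype.card_finset_len, Fintype.card_fin]
  -- the injection into F
  let G : T → F := fun x =>
    ⟨List.ofFn (fun i : Fin (n + k) =>
        if h : i ∈ x.1.1 then (x.2 ⟨i, h⟩).1 else α), by
      constructor
      · simp
      · rw [List.replicate_sublist_iff, count_ofFn_eq_sum]
        calc n = (x.1.1ᶜ).card := by
                rw [Finset.card_compl, Fintype.card_fin, x.1.2]; omega
          _ = ∑ i ∈ x.1.1ᶜ, 1 := by rw [Finset.sum_const, smul_eq_mul, mul_one]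
          _ ≤ ∑ i ∈ x.1.1ᶜ, (if (if h : i ∈ x.1.1 then (x.2 ⟨i, h⟩).1 else α) = α
                then 1 else 0) := by
                apply Finset.sum_le_sum
                intro i hi
                rw [Finset.mem_compl] at hi
                simp [hi]
          _ ≤ _ := Finset.sum_le_sum_of_subset (Finset.subset_univ _)⟩
  have hGinj : Function.Injective G := by
    rintro ⟨S₁, f₁⟩ ⟨S₂, f₂⟩ h
    have hval := congrArg Subtype.val h
    simp only [G] at hval
    have h' := List.ofFn_injective hval
    have hpt : ∀ i : Fin (n + k),
        (if h : i ∈ S₁.1 then (f₁ ⟨i, h⟩).1 else α) =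
        (if h : i ∈ S₂.1 then (f₂ ⟨i, h⟩).1 else α) := fun i => congrFun h' i
    have hS : S₁ = S₂ := by
      apply Subtype.ext
      ext i
      have := hpt i
      constructor
      · intro hi
        by_contra hi2
        rw [dif_pos hi, dif_neg hi2] at this
        exact (f₁ ⟨i, hi⟩).2 this
      · intro hi
        by_contra hi2
        rw [dif_neg hi2, dif_pos hi] at this
        exact (f₂ ⟨i, hi⟩).2 this.symm
    subst hS
    congr 1
    funext i
    have := hpt i.1
    rw [dif_pos i.2, dif_pos i.2] at this
    exact Subtype.ext this
  have h1 : Nat.card F ≥ (n + k).choose k * (a - 1) ^ k := by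
    calc (n + k).choose k * (a - 1) ^ k = Fintype.card T := hT.symm
      _ = Nat.card T := (Nat.card_eq_fintype_card).symm
      _ ≤ Nat.card F := Nat.card_le_card_of_injective G hGinj
  refine ⟨h1, ?_⟩
  -- PostEditSet finite
  have hPfin : (PostEditSet (List.replicate n α) 0 k).Finite := by
    apply (List.finite_length_le 𝒜 (n + k)).subset
    rintro Y ⟨Z, hZX, hZY, _, hYk⟩
    have h1 : Z.length ≤ n := by simpa using hZX.length_le
    have h2 : Z.length ≤ Y.length := hZY.length_le
    simp only [Set.mem_setOf_eq]
    omega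
  have : Finite (PostEditSet (List.replicate n α) 0 k) := hPfin.to_subtype
  -- injection F → PostEditSet
  let H : F → PostEditSet (List.replicate n α) 0 k := fun Y =>
    ⟨Y.1, ⟨List.replicate n α, List.Sublist.refl _, Y.2.2, by simp, by
      rw [Y.2.1, List.length_replicate]; omega⟩⟩
  have hHinj : Function.Injective H := by
    rintro ⟨Y₁, h₁⟩ ⟨Y₂, h₂⟩ h
    have hv := congrArg Subtype.val h
    simp only [H] at hv
    exact Subtype.ext hv
  calc (n + k).choose k * (a - 1) ^ k ≤ Nat.card F := h1
    _ ≤ _ := Nat.card_le_card_of_injective H hHinj
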